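/- arXiv:math/0401065 — 3 statements merged into one kernel-verified Lean document; each statement's English description precedes it below -/
import Mathlib

section
/- For every natural number k, Σ_{i=0}^{k} 2^{k+2−i} (−1)^{k−i} (k+1−i) · C(k+3, i) = (−1)^k · (k+2 + (−1)^k (k+2)). -/
open Finset

lemma L1 (n : ℕ) :
    ∑ i ∈ range (n + 1), (Nat.choose n i : ℤ) * (-1) ^ i * 2 ^ (n - i) = 1 := by
  have h1 : ((-1 : ℤ) + 2) ^ n = 1 := by norm_num
  rw [add_pow] at h1
  refine Eq.trans ?_ h1
  exact Finset.sum_congr rfl fun i _ => by ring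

lemma Lchoose (n i : ℕ) :
    (n + 1) * Nat.choose n i = Nat.choose (n + 1) i * (n + 1 - i) := by
  exact (Nat.add_one_mul_choose_eq n i).trans (Nat.choose_succ_right_eq (n + 1) i)

lemma L2 (n : ℕ) :
    ∑ i ∈ range (n + 1),
      (Nat.choose (n + 1) i : ℤ) * (-1) ^ i * ((n : ℤ) + 1 - i) * 2 ^ (n - i) =
      (n : ℤ) + 1 := by
  have key : ∀ i ∈ range (n + 1),
      (Nat.choose (n + 1) i : ℤ) * (-1) ^ i * ((n : ℤ) + 1 - i) * 2 ^ (n - i) =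
      ((n : ℤ) + 1) * ((Nat.choose n i : ℤ) * (-1) ^ i * 2 ^ (n - i)) := by
    intro i hi
    have hle : i ≤ n := Nat.lt_succ_iff.mp (mem_range.mp hi)
    have h := Lchoose n i
    have hc : ((n : ℤ) + 1) * (Nat.choose n i : ℤ) =
        (Nat.choose (n + 1) i : ℤ) * ((n : ℤ) + 1 - i) := by
      have := congrArg (fun m : ℕ => (m : ℤ)) h
      push_cast [Nat.cast_sub (by omega : i ≤ n + 1)] at this
      linarith
    calc (Nat.choose (n + 1) i : ℤ) * (-1) ^ i * ((n : ℤ) + 1 - i) * 2 ^ (n - i)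
        = ((Nat.choose (n + 1) i : ℤ) * ((n : ℤ) + 1 - i)) * ((-1) ^ i * 2 ^ (n - i)) := by ring
      _ = (((n : ℤ) + 1) * (Nat.choose n i : ℤ)) * ((-1) ^ i * 2 ^ (n - i)) := by rw [hc]
      _ = ((n : ℤ) + 1) * ((Nat.choose n i : ℤ) * (-1) ^ i * 2 ^ (n - i)) := by ring
  rw [Finset.sum_congr rfl key, ← Finset.mul_sum, L1, mul_one]

theorem euler_char_22 (k : ℕ) :
    ∑ i ∈ Finset.range (k + 1),
        (2 : ℤ) ^ (k + 2 - i) * (-1 : ℤ) ^ (k - i) * ((k : ℤ) + 1 - (i : ℤ)) *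
          (Nat.choose (k + 3) i : ℤ) =
      (-1 : ℤ) ^ k * ((k : ℤ) + 2 + (-1 : ℤ) ^ k * ((k : ℤ) + 2)) := by
  set f : ℕ → ℤ := fun i =>
    (Nat.choose (k + 3) i : ℤ) * (-1) ^ i * ((k : ℤ) + 3 - i) * 2 ^ (k + 2 - i) with hf
  set g : ℕ → ℤ := fun i =>
    (Nat.choose (k + 3) i : ℤ) * (-1) ^ i * 2 ^ (k + 3 - i) with hg
  have hA : ∑ i ∈ range (k + 3), f i = (k : ℤ) + 3 := by
    calc ∑ i ∈ range (k + 3), f i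
        = ∑ i ∈ range (k + 2 + 1),
            (Nat.choose (k + 2 + 1) i : ℤ) * (-1) ^ i * (((k : ℕ) + 2 : ℤ) + 1 - i) *
              2 ^ (k + 2 - i) :=
          Finset.sum_congr rfl fun i _ => by simp only [hf]; push_cast; ring
      _ = ((k : ℕ) + 2 : ℤ) + 1 := by
          have h := L2 (k + 2)
          push_cast at h ⊢
          convert h using 1
      _ = (k : ℤ) + 3 := by push_cast; ring
  have hB : ∑ i ∈ range (k + 4), g i = 1 := L1 (k + 3)
  rw [show k + 3 = (k + 1) + 1 + 1 by ring, Finset.sum_range_succ, Finset.sum_range_succ] at hA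
  rw [show k + 4 = (k + 1) + 1 + 1 + 1 by ring, Finset.sum_range_succ, Finset.sum_range_succ,
    Finset.sum_range_succ] at hB
  have hmain : ∀ i ∈ range (k + 1),
      (2 : ℤ) ^ (k + 2 - i) * (-1 : ℤ) ^ (k - i) * ((k : ℤ) + 1 - (i : ℤ)) *
        (Nat.choose (k + 3) i : ℤ) = (-1) ^ k * (f i - g i) := by
    intro i hi
    have hle : i ≤ k := Nat.lt_succ_iff.mp (mem_range.mp hi)
    have hsign : ((-1 : ℤ)) ^ (k - i) * (-1) ^ i = (-1) ^ k := by
      rw [← pow_add]; congr 1; omega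
    have hsq : ((-1 : ℤ)) ^ i * (-1) ^ i = 1 := by
      rw [← pow_add, ← two_mul, pow_mul]; norm_num
    have hs : ((-1 : ℤ)) ^ (k - i) = (-1) ^ k * (-1) ^ i := by
      calc ((-1 : ℤ)) ^ (k - i) = (-1) ^ (k - i) * ((-1) ^ i * (-1) ^ i) := by
            rw [hsq, mul_one]
        _ = ((-1) ^ (k - i) * (-1) ^ i) * (-1) ^ i := by ring
        _ = (-1) ^ k * (-1) ^ i := by rw [hsign]
    have hpow : (2 : ℤ) ^ (k + 3 - i) = 2 * 2 ^ (k + 2 - i) := by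
      rw [show k + 3 - i = (k + 2 - i) + 1 by omega, pow_succ]; ring
    simp only [hf, hg, hpow, hs]
    ring
  rw [Finset.sum_congr rfl hmain, ← Finset.mul_sum, Finset.sum_sub_distrib]
  have e1 : ∑ i ∈ range (k + 1), f i = (k : ℤ) + 3 - f (k + 1) - f (k + 2) := by linarith
  have e2 : ∑ i ∈ range (k + 1), g i = 1 - g (k + 1) - g (k + 2) - g (k + 3) := by linarith
  rw [e1, e2]
  have c1 : (Nat.choose (k + 3) (k + 2) : ℤ) = (k : ℤ) + 3 := by
    have h : Nat.choose (k + 3) (k + 2) = k + 3 := by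
      rw [show k + 3 = (k + 2) + 1 by ring, Nat.choose_succ_self_right]
    rw [h]; push_cast; ring
  have c2 : Nat.choose (k + 3) (k + 3) = 1 := Nat.choose_self _
  have sq : ((-1 : ℤ)) ^ k * (-1) ^ k = 1 := by
    rw [← pow_add, ← two_mul, pow_mul]; norm_num
  simp only [hf, hg, c1, c2,
    show ((-1 : ℤ)) ^ (k + 1) = -(-1) ^ k from by rw [pow_succ]; ring,
    show ((-1 : ℤ)) ^ (k + 2) = (-1) ^ k from by rw [pow_add]; norm_num,
    show ((-1 : ℤ)) ^ (k + 3) = -(-1) ^ k from by rw [pow_add]; norm_num,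
    show k + 2 - (k + 1) = 1 from by omega, show k + 2 - (k + 2) = 0 from by omega,
    show k + 3 - (k + 1) = 2 from by omega, show k + 3 - (k + 2) = 1 from by omega,
    show k + 3 - (k + 3) = 0 from by omega,
    show k + 1 - k = 1 from by omega, show k - k = 0 from by omega,
    show k + 2 - k = 2 from by omega]
  push_cast
  ring_nf
end

section
/- The Euler characteristic of a type (2,2) complete intersection in P^{k+2} equals 0 when k is odd and equals 2(k+2) when k is even, where it is defined as χ_{22}(k) = Σ_{i=0}^{k} 2^{k+2−i} (−1)^{k−i} (k+1−i) · C(k+3, i). -/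
open Finset

private lemma lemA (n : ℕ) :
    ∑ i ∈ range (n + 1), (-1 : ℤ) ^ i * 2 ^ (n - i) * (n.choose i : ℤ) = 1 := by
  rw [← add_pow]
  norm_num

private lemma lemB (n : ℕ) :
    ∑ i ∈ range (n + 1), (i : ℤ) * ((-1 : ℤ) ^ i * 2 ^ (n - i) * (n.choose i : ℤ)) = -n := by
  cases n with
  | zero => simp
  | succ m =>
    rw [Finset.sum_range_succ']
    simp only [Nat.cast_zero, zero_mul, add_zero]
    have hstep : ∀ j ∈ range (m + 1),
        ((j + 1 : ℕ) : ℤ) * ((-1 : ℤ) ^ (j + 1) * 2 ^ (m + 1 - (j + 1)) * ((m + 1).choose (j + 1) : ℤ))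
          = (-((m : ℤ) + 1)) * ((-1 : ℤ) ^ j * 2 ^ (m - j) * (m.choose j : ℤ)) := by
      intro j hj
      have hc : ((m + 1).choose (j + 1) : ℤ) * ((j : ℤ) + 1) = ((m : ℤ) + 1) * (m.choose j : ℤ) := by
        exact_mod_cast (Nat.add_one_mul_choose_eq m j).symm
      have he : m + 1 - (j + 1) = m - j := by omega
      rw [he, pow_succ]
      push_cast
      linear_combination (-((-1 : ℤ) ^ j * 2 ^ (m - j))) * hc
    rw [Finset.sum_congr rfl hstep, ← Finset.mul_sum, lemA]
    push_cast
    ring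

theorem chi_22_values (k : ℕ) :
    (Odd k → ∑ i ∈ Finset.range (k + 1),
        (2 : ℤ) ^ (k + 2 - i) * (-1 : ℤ) ^ (k - i) * ((k : ℤ) + 1 - (i : ℤ)) *
          (Nat.choose (k + 3) i : ℤ) = 0) ∧
    (Even k → ∑ i ∈ Finset.range (k + 1),
        (2 : ℤ) ^ (k + 2 - i) * (-1 : ℤ) ^ (k - i) * ((k : ℤ) + 1 - (i : ℤ)) *
          (Nat.choose (k + 3) i : ℤ) = 2 * ((k : ℤ) + 2)) := by
  set S := ∑ i ∈ Finset.range (k + 1),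
      (2 : ℤ) ^ (k + 2 - i) * (-1 : ℤ) ^ (k - i) * ((k : ℤ) + 1 - (i : ℤ)) *
        (Nat.choose (k + 3) i : ℤ) with hS
  -- g is the extended summand
  set g : ℕ → ℤ := fun i =>
    (-1 : ℤ) ^ k * (((k : ℤ) + 1 - (i : ℤ)) * ((-1 : ℤ) ^ i * 2 ^ (k + 3 - i) * ((k + 3).choose i : ℤ))) with hg
  have key : 2 * S = (-1 : ℤ) ^ k * (2 * k + 4) + (2 * k + 4) := by
    have h1 : 2 * S = ∑ i ∈ range (k + 1), g i := by
      rw [hS, Finset.mul_sum]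
      refine Finset.sum_congr rfl fun i hi => ?_
      have hik : i ≤ k := Nat.lt_succ_iff.mp (Finset.mem_range.mp hi)
      have hsq : (-1 : ℤ) ^ i * (-1 : ℤ) ^ i = 1 := by
        rw [← pow_add]
        exact Even.neg_one_pow ⟨i, rfl⟩
      have hs : (-1 : ℤ) ^ (k - i) * (-1 : ℤ) ^ i = (-1 : ℤ) ^ k := by
        rw [← pow_add, Nat.sub_add_cancel hik]
      have hrw : (-1 : ℤ) ^ (k - i) = (-1 : ℤ) ^ k * (-1 : ℤ) ^ i := by
        calc (-1 : ℤ) ^ (k - i) = (-1 : ℤ) ^ (k - i) * ((-1 : ℤ) ^ i * (-1 : ℤ) ^ i) := by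
              rw [hsq, mul_one]
          _ = ((-1 : ℤ) ^ (k - i) * (-1 : ℤ) ^ i) * (-1 : ℤ) ^ i := by ring
          _ = (-1 : ℤ) ^ k * (-1 : ℤ) ^ i := by rw [hs]
      have he : k + 3 - i = (k + 2 - i) + 1 := by omega
      rw [hg]
      simp only []
      rw [hrw, he, pow_succ]
      ring
    have hfull : ∑ i ∈ range (k + 4), g i = (-1 : ℤ) ^ k * (2 * k + 4) := by
      have hA := lemA (k + 3)
      have hB := lemB (k + 3)
      have hsplit : ∑ i ∈ range (k + 4), g i
          = (-1 : ℤ) ^ k * ((k : ℤ) + 1) *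
              (∑ i ∈ range ((k + 3) + 1), (-1 : ℤ) ^ i * 2 ^ (k + 3 - i) * ((k + 3).choose i : ℤ))
            - (-1 : ℤ) ^ k *
              (∑ i ∈ range ((k + 3) + 1), (i : ℤ) * ((-1 : ℤ) ^ i * 2 ^ (k + 3 - i) * ((k + 3).choose i : ℤ))) := by
        rw [Finset.mul_sum, Finset.mul_sum, ← Finset.sum_sub_distrib]
        refine Finset.sum_congr rfl fun i hi => ?_
        rw [hg]; ring
      rw [hsplit, hA, hB]
      push_cast
      ring
    have hext : ∑ i ∈ range (k + 4), g i
        = (∑ i ∈ range (k + 1), g i) + g (k + 1) + g (k + 2) + g (k + 3) := by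
      rw [show k + 4 = (k + 3) + 1 from rfl, Finset.sum_range_succ,
        show k + 3 = (k + 2) + 1 from rfl, Finset.sum_range_succ,
        show k + 2 = (k + 1) + 1 from rfl, Finset.sum_range_succ]
    have hg1 : g (k + 1) = 0 := by
      simp only [hg]; push_cast; ring
    have hg2 : g (k + 2) = -2 * ((k : ℤ) + 3) := by
      have hc : (k + 3).choose (k + 2) = k + 3 := by
        rw [show k + 2 = k + 3 - 1 from rfl, Nat.choose_symm (by omega), Nat.choose_one_right]
      simp only [hg]
      rw [hc, show k + 3 - (k + 2) = 1 from by omega, pow_add]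
      push_cast
      have hsq : (-1 : ℤ) ^ k * (-1 : ℤ) ^ k = 1 := by
        rw [← pow_add]; exact Even.neg_one_pow ⟨k, rfl⟩
      linear_combination (-2 * ((k : ℤ) + 3)) * hsq
    have hg3 : g (k + 3) = 2 := by
      simp only [hg]
      rw [show k + 3 - (k + 3) = 0 from by omega, Nat.choose_self, pow_add]
      push_cast
      have hsq : (-1 : ℤ) ^ k * (-1 : ℤ) ^ k = 1 := by
        rw [← pow_add]; exact Even.neg_one_pow ⟨k, rfl⟩
      linear_combination 2 * hsq
    rw [h1]
    have := hext
    rw [hfull, hg1, hg2, hg3] at this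
    linarith
  constructor
  · intro hodd
    have h1 : (-1 : ℤ) ^ k = -1 := Odd.neg_one_pow hodd
    rw [h1] at key
    linarith
  · intro heven
    have h1 : (-1 : ℤ) ^ k = 1 := Even.neg_one_pow heven
    rw [h1] at key
    linarith
end

section
/- The integral formula Σ over the coefficient of H^{k+2} in (2H/(1+2H))^2 · (1+H)^{k+3} equals Σ_{i=0}^{k} 2^{k+2−i}(−1)^{k−i}(k+1−i)·C(k+3,i). -/
open PowerSeries

private noncomputable def Sgeo : ℚ⟦X⟧ := PowerSeries.mk fun n => (-2 : ℚ) ^ n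

private lemma Sgeo_inv : ((1 : ℚ⟦X⟧) + 2 * PowerSeries.X)⁻¹ = Sgeo := by
  rw [PowerSeries.inv_eq_iff_mul_eq_one (by simp)]
  ext n
  rw [mul_add, mul_one]
  cases n with
  | zero => simp [Sgeo]
  | succ m =>
    rw [show (2 : ℚ⟦X⟧) = PowerSeries.C (R := ℚ) 2 from (map_ofNat _ 2).symm,
      show Sgeo * (PowerSeries.C (R := ℚ) 2 * PowerSeries.X)
        = PowerSeries.C (R := ℚ) 2 * (Sgeo * PowerSeries.X) by ring,
      map_add, PowerSeries.coeff_C_mul, PowerSeries.coeff_succ_mul_X]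
    simp [Sgeo, pow_succ]
    ring

private lemma Sgeo_sq :
    Sgeo * Sgeo = PowerSeries.mk fun n => ((n : ℚ) + 1) * (-2 : ℚ) ^ n := by
  ext n
  rw [PowerSeries.coeff_mul]
  simp only [Sgeo, PowerSeries.coeff_mk]
  rw [Finset.sum_congr rfl (fun p hp => by
    rw [← pow_add, Finset.HasAntidiagonal.mem_antidiagonal.mp hp]),
    Finset.sum_const, Finset.Nat.card_antidiagonal, nsmul_eq_mul]
  push_cast; ring

private lemma coeff_one_add_pow (m n : ℕ) :
    PowerSeries.coeff (R := ℚ) n ((1 + PowerSeries.X) ^ m) = m.choose n := by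
  have h : ((1 : ℚ⟦X⟧) + PowerSeries.X) ^ m
      = (((1 + Polynomial.X) ^ m : Polynomial ℚ) : ℚ⟦X⟧) := by
    simp [Polynomial.coe_pow, Polynomial.coe_add, Polynomial.coe_one]
  rw [h, Polynomial.coeff_coe, Polynomial.coeff_one_add_X_pow]

theorem coeff_integral_formula (k : ℕ) :
    (PowerSeries.coeff (R := ℚ) (k + 2))
        ((2 * PowerSeries.X * (1 + 2 * PowerSeries.X)⁻¹) ^ 2 *
          (1 + PowerSeries.X) ^ (k + 3)) =
      ∑ i ∈ Finset.range (k + 1),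
        (2 : ℚ) ^ (k + 2 - i) * (-1 : ℚ) ^ (k - i) * ((k : ℚ) + 1 - (i : ℚ)) *
          (Nat.choose (k + 3) i : ℚ) := by
  rw [Sgeo_inv,
    show (2 * PowerSeries.X * Sgeo) ^ 2 * (1 + PowerSeries.X) ^ (k + 3)
      = PowerSeries.X ^ 2 * ((1 + PowerSeries.X) ^ (k + 3)
        * (PowerSeries.C (R := ℚ) 4 * (Sgeo * Sgeo))) by
      rw [show (PowerSeries.C (R := ℚ) 4 : ℚ⟦X⟧) = 4 from map_ofNat _ 4]; ring,
    PowerSeries.coeff_X_pow_mul, PowerSeries.coeff_mul, Sgeo_sq,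
    Finset.Nat.sum_antidiagonal_eq_sum_range_succ_mk]
  refine Finset.sum_congr rfl fun i hi => ?_
  have hik : i ≤ k := Finset.mem_range_succ_iff.mp hi
  rw [coeff_one_add_pow, PowerSeries.coeff_C_mul, PowerSeries.coeff_mk,
    show k + 2 - i = (k - i) + 2 by omega, pow_add, neg_pow, Nat.cast_sub hik]
  ring
end
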